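/- Let F : [0, ∞) → ℝ^I be a solution of the discrete exact-resonance acoustic kinetic system. Then the quantity ∑_{k=1}^{I} k·F_k(t) is constant in t (conservation of energy). -/

import Mathlib

open scoped BigOperators Classical

/-- Right-hand side of the discrete exact-resonance acoustic kinetic system on one ray:
for `k₁ ∈ {1,…,I}` and kernel `V_{k₁,k₂,k₃} = μ k₁ k₂ k₃`,
`Q_{k₁}[F] = ∑_{k₂+k₃=k₁} V (F_{k₂}F_{k₃} − F_{k₁}(F_{k₂}+F_{k₃}))
  − 2 ∑_{k₁+k₂=k₃} V (F_{k₁}F_{k₂} − F_{k₃}(F_{k₁}+F_{k₂}))`. -/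
noncomputable def Qd (I : ℕ) (μ : ℝ) (F : ℕ → ℝ) (k1 : ℕ) : ℝ :=
  (∑ k2 ∈ Finset.Icc 1 I, ∑ k3 ∈ Finset.Icc 1 I,
      if k2 + k3 = k1 then μ * k1 * k2 * k3 * (F k2 * F k3 - F k1 * (F k2 + F k3)) else 0)
  - 2 * ∑ k2 ∈ Finset.Icc 1 I, ∑ k3 ∈ Finset.Icc 1 I,
      if k1 + k2 = k3 then μ * k3 * k1 * k2 * (F k1 * F k2 - F k3 * (F k1 + F k2)) else 0

lemma sym_sum (s : Finset ℕ) (X : ℕ → ℕ → ℝ) (hX : ∀ a b, X a b = X b a) :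
    ∑ a ∈ s, ∑ b ∈ s, (a : ℝ) * X a b = ∑ a ∈ s, ∑ b ∈ s, (b : ℝ) * X a b := by
  rw [Finset.sum_comm]
  exact Finset.sum_congr rfl fun a _ => Finset.sum_congr rfl fun b _ => by rw [hX a b]

lemma key (I : ℕ) (μ : ℝ) (F : ℕ → ℝ) :
    ∑ k ∈ Finset.Icc 1 I, (k : ℝ) * Qd I μ F k = 0 := by
  classical
  set X : ℕ → ℕ → ℝ := fun a b =>
    if a + b ∈ Finset.Icc 1 I then μ * (a+b) * a * b * (F a * F b - F (a+b) * (F a + F b)) else 0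
    with hXdef
  have hXsym : ∀ a b, X a b = X b a := by
    intro a b
    simp only [hXdef]
    rw [add_comm b a]
    split_ifs with h
    · ring
    · rfl
  have collapse1 :
      ∑ k1 ∈ Finset.Icc 1 I, (k1 : ℝ) * (∑ k2 ∈ Finset.Icc 1 I, ∑ k3 ∈ Finset.Icc 1 I,
        if k2 + k3 = k1 then μ * k1 * k2 * k3 * (F k2 * F k3 - F k1 * (F k2 + F k3)) else 0)
      = ∑ a ∈ Finset.Icc 1 I, ∑ b ∈ Finset.Icc 1 I, ((a : ℝ) + b) * X a b := by
    simp only [Finset.mul_sum, mul_ite, mul_zero]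
    rw [Finset.sum_comm]
    refine Finset.sum_congr rfl fun a _ => ?_
    rw [Finset.sum_comm]
    refine Finset.sum_congr rfl fun b _ => ?_
    rw [Finset.sum_ite_eq (Finset.Icc 1 I) (a + b)
      (fun k1 => (k1 : ℝ) * (μ * k1 * a * b * (F a * F b - F k1 * (F a + F b))))]
    simp only [hXdef, mul_ite, mul_zero]
    split_ifs with h
    · push_cast; ring
    · rfl
  have collapse2 :
      ∑ k1 ∈ Finset.Icc 1 I, (k1 : ℝ) * (2 * ∑ k2 ∈ Finset.Icc 1 I, ∑ k3 ∈ Finset.Icc 1 I,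
        if k1 + k2 = k3 then μ * k3 * k1 * k2 * (F k1 * F k2 - F k3 * (F k1 + F k2)) else 0)
      = ∑ a ∈ Finset.Icc 1 I, ∑ b ∈ Finset.Icc 1 I, (2 * a : ℝ) * X a b := by
    simp only [Finset.mul_sum, mul_ite, mul_zero]
    refine Finset.sum_congr rfl fun a _ => Finset.sum_congr rfl fun b _ => ?_
    rw [Finset.sum_ite_eq (Finset.Icc 1 I) (a + b)
      (fun k3 => (a : ℝ) * (2 * (μ * k3 * a * b * (F a * F b - F k3 * (F a + F b)))))]
    simp only [hXdef, mul_ite, mul_zero]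
    split_ifs with h
    · push_cast; ring
    · rfl
  have expand : ∑ k ∈ Finset.Icc 1 I, (k : ℝ) * Qd I μ F k
      = (∑ k1 ∈ Finset.Icc 1 I, (k1 : ℝ) * (∑ k2 ∈ Finset.Icc 1 I, ∑ k3 ∈ Finset.Icc 1 I,
          if k2 + k3 = k1 then μ * k1 * k2 * k3 * (F k2 * F k3 - F k1 * (F k2 + F k3)) else 0))
        - ∑ k1 ∈ Finset.Icc 1 I, (k1 : ℝ) * (2 * ∑ k2 ∈ Finset.Icc 1 I, ∑ k3 ∈ Finset.Icc 1 I,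
          if k1 + k2 = k3 then μ * k3 * k1 * k2 * (F k1 * F k2 - F k3 * (F k1 + F k2)) else 0) := by
    rw [← Finset.sum_sub_distrib]
    refine Finset.sum_congr rfl fun k _ => ?_
    rw [Qd, mul_sub]
  rw [expand, collapse1, collapse2, sub_eq_zero]
  have hsplit : ∀ a b : ℕ, ((a : ℝ) + b) * X a b = (a : ℝ) * X a b + (b : ℝ) * X a b := by
    intro a b; ring
  simp only [hsplit, Finset.sum_add_distrib]
  rw [← sym_sum (Finset.Icc 1 I) X hXsym]
  rw [← two_mul, Finset.mul_sum]
  refine Finset.sum_congr rfl fun a _ => ?_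
  rw [Finset.mul_sum]
  exact Finset.sum_congr rfl fun b _ => by ring

/-- Conservation of energy for the discrete exact-resonance acoustic kinetic system:
along any solution, `∑_{k=1}^I k F_k(t)` is constant in `t`. -/
theorem energy_conservation_exact_resonance (I : ℕ) (hI : 0 < I) (μ : ℝ) (hμ : 0 < μ)
    (F : ℝ → ℕ → ℝ)
    (hsol : ∀ k ∈ Finset.Icc 1 I, ∀ t : ℝ, 0 ≤ t →
      HasDerivAt (fun s => F s k) (Qd I μ (F t) k) t) :
    ∀ t : ℝ, 0 ≤ t →
      ∑ k ∈ Finset.Icc 1 I, (k : ℝ) * F t k = ∑ k ∈ Finset.Icc 1 I, (k : ℝ) * F 0 k := by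
  intro t ht
  set E : ℝ → ℝ := fun s => ∑ k ∈ Finset.Icc 1 I, (k : ℝ) * F s k with hE
  have hderiv : ∀ s : ℝ, 0 ≤ s → HasDerivAt E 0 s := by
    intro s hs
    have h1 : HasDerivAt E (∑ k ∈ Finset.Icc 1 I, (k : ℝ) * Qd I μ (F s) k) s := by
      refine HasDerivAt.fun_sum fun k hk => ?_
      exact (hsol k hk s hs).const_mul _
    rwa [key I μ (F s)] at h1
  rcases eq_or_lt_of_le ht with h | h
  · rw [← h]
  · have hdiff : DifferentiableOn ℝ E (Set.Icc 0 t) := fun x hx =>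
      ((hderiv x hx.1).differentiableAt).differentiableWithinAt
    have hd0 : ∀ x ∈ Set.Ico 0 t, derivWithin E (Set.Icc 0 t) x = 0 := by
      intro x hx
      exact ((hderiv x hx.1).hasDerivWithinAt).derivWithin
        (uniqueDiffOn_Icc h x ⟨hx.1, hx.2.le⟩)
    have := constant_of_derivWithin_zero hdiff hd0 t (Set.right_mem_Icc.2 ht)
    exact this
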